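/- Let T be a well-separated tree metric, let x, y be strings of length at most n over T, and let s_r(x), s_r(y) be their r-simplifications. If dtw(x, y) > nr, then dtw(s_r(x), s_r(y)) > nr/2. -/

import Mathlib

/-- `xb` is an expansion of `x`: each letter of `x` is duplicated in place a positive
number of times. -/
def IsExpansion {α : Type*} (x xb : List α) : Prop :=
  ∃ ks : List ℕ, ks.length = x.length ∧ (∀ k ∈ ks, 0 < k) ∧
    xb = (List.zipWith (fun a k => List.replicate k a) x ks).flatten

/-- `(xb, yb)` is a correspondence between `x` and `y`: a pair of equal-length expansions. -/
def IsCorrespondence {α : Type*} (x y xb yb : List α) : Prop :=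
  IsExpansion x xb ∧ IsExpansion y yb ∧ xb.length = yb.length

/-- The cost of a correspondence: summed distances of aligned letters. -/
noncomputable def corrCost {α : Type*} (δ : α → α → ℝ) (xb yb : List α) : ℝ :=
  (List.zipWith δ xb yb).sum

/-- Dynamic time warping distance with respect to a distance function `δ`. -/
noncomputable def dtw {α : Type*} (δ : α → α → ℝ) (x y : List α) : ℝ :=
  sInf {c | ∃ xb yb, IsCorrespondence x y xb yb ∧ c = corrCost δ xb yb}

/-- Generalized Hamming distance on letters. -/
noncomputable def hamDist {α : Type*} [DecidableEq α] (a b : α) : ℝ := if a = b then 0 else 1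

/-- DTW over generalized Hamming space. -/
noncomputable def dtw0 {α : Type*} [DecidableEq α] (x y : List α) : ℝ := dtw hamDist x y

/-- A well-separated tree metric: a rooted tree on Σ with positive edge weights
(`w v` is the weight of the edge from `v` to its parent) that are non-increasing
along root-to-leaf paths. -/
structure WSTree (σ : Type*) where
  root : σ
  par : σ → σ
  w : σ → ℝ
  depth : σ → ℕ
  depth_root : depth root = 0
  root_of_depth : ∀ v, depth v = 0 → v = root
  par_root : par root = root
  depth_par : ∀ v, v ≠ root → depth (par v) + 1 = depth v
  w_pos : ∀ v, v ≠ root → 0 < w v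
  w_mono : ∀ v, v ≠ root → par v ≠ root → w v ≤ w (par v)

/-- The k-th iterated ancestor of v. -/
def WSTree.anc {σ : Type*} (T : WSTree σ) (v : σ) : ℕ → σ
  | 0 => v
  | k + 1 => T.par (T.anc v k)

/-- The maximum weight among the first k edges on the path from v towards the root. -/
noncomputable def WSTree.upMax {σ : Type*} (T : WSTree σ) (v : σ) : ℕ → ℝ
  | 0 => 0
  | k + 1 => max (T.upMax v k) (T.w (T.anc v k))

/-- The well-separated tree metric distance: the maximum edge weight on the tree path
between u and v (minimized over common ancestors through which the path may pass). -/
noncomputable def WSTree.tdist {σ : Type*} (T : WSTree σ) (u v : σ) : ℝ :=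
  sInf {c | ∃ j k, T.anc u j = T.anc v k ∧ c = max (T.upMax u j) (T.upMax v k)}

/-- The number of steps up from v to its highest ancestor reachable via edges of
weight at most r/4. -/
noncomputable def WSTree.srIdx {σ : Type*} (T : WSTree σ) (r : ℝ) (v : σ) : ℕ :=
  sSup {k | k ≤ T.depth v ∧ ∀ i < k, T.w (T.anc v i) ≤ r / 4}

/-- The r-simplification on letters: the highest ancestor of v reachable from v via
edges of weight at most r/4. -/
noncomputable def WSTree.sr {σ : Type*} (T : WSTree σ) (r : ℝ) (v : σ) : σ :=
  T.anc v (T.srIdx r v)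

namespace DTWAux
variable {σ : Type*} (T : WSTree σ)

lemma anc_add (v : σ) (a b : ℕ) : T.anc v (a + b) = T.anc (T.anc v a) b := by
  induction b with
  | zero => rfl
  | succ b ih => rw [← Nat.add_assoc]; simp [WSTree.anc, ih]

lemma upMax_nonneg (v : σ) (k : ℕ) : 0 ≤ T.upMax v k := by
  induction k with
  | zero => simp [WSTree.upMax]
  | succ k ih => simp [WSTree.upMax]; left; exact ih

lemma upMax_add (v : σ) (a b : ℕ) :
    T.upMax v (a + b) = max (T.upMax v a) (T.upMax (T.anc v a) b) := by
  induction b with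
  | zero => simp [WSTree.upMax, upMax_nonneg]
  | succ b ih =>
      rw [← Nat.add_assoc]
      simp only [WSTree.upMax, ih, anc_add, max_assoc]

lemma anc_depth (v : σ) : T.anc v (T.depth v) = T.root := by
  generalize hd : T.depth v = d
  induction d generalizing v with
  | zero => rw [T.root_of_depth v hd]; rfl
  | succ d ih =>
      have hv : v ≠ T.root := fun h => by rw [h, T.depth_root] at hd; exact Nat.succ_ne_zero d hd.symm
      have hp := T.depth_par v hv
      rw [hd] at hp
      have hanc : ∀ k, T.anc v (k + 1) = T.anc (T.par v) k := by
        intro k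
        induction k with
        | zero => rfl
        | succ k ih2 =>
            show T.par (T.anc v (k+1)) = T.par (T.anc (T.par v) k)
            rw [ih2]
      rw [hanc d, ih (T.par v) (Nat.succ_injective hp)]

lemma tdistSet_nonempty (u v : σ) :
    Set.Nonempty {c | ∃ j k, T.anc u j = T.anc v k ∧ c = max (T.upMax u j) (T.upMax v k)} := by
  exact ⟨_, T.depth u, T.depth v, by rw [anc_depth, anc_depth], rfl⟩

lemma tdistSet_bddBelow (u v : σ) :
    BddBelow {c | ∃ j k, T.anc u j = T.anc v k ∧ c = max (T.upMax u j) (T.upMax v k)} := by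
  refine ⟨0, fun c hc => ?_⟩
  obtain ⟨j, k, -, rfl⟩ := hc
  exact le_max_of_le_left (upMax_nonneg T u j)

lemma tdist_nonneg (u v : σ) : 0 ≤ T.tdist u v :=
  le_csInf (tdistSet_nonempty T u v) (fun c hc => by
    obtain ⟨j, k, -, rfl⟩ := hc; exact le_max_of_le_left (upMax_nonneg T u j))

lemma srIdx_mem (r : ℝ) (v : σ) :
    T.srIdx r v ≤ T.depth v ∧ ∀ i < T.srIdx r v, T.w (T.anc v i) ≤ r / 4 := by
  have : T.srIdx r v ∈ {k | k ≤ T.depth v ∧ ∀ i < k, T.w (T.anc v i) ≤ r / 4} := by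
    apply Nat.sSup_mem
    · exact ⟨0, by simp⟩
    · exact ⟨T.depth v, fun k hk => hk.1⟩
  exact this

lemma upMax_le_of (r : ℝ) (hr : 0 ≤ r) (v : σ) (m : ℕ)
    (hm : ∀ i < m, T.w (T.anc v i) ≤ r / 4) : T.upMax v m ≤ r / 4 := by
  induction m with
  | zero => simpa [WSTree.upMax] using by positivity
  | succ m ih =>
      simp only [WSTree.upMax, max_le_iff]
      exact ⟨ih (fun i hi => hm i (Nat.lt_succ_of_lt hi)), hm m (Nat.lt_succ_self m)⟩

lemma upMax_sr_le (r : ℝ) (hr : 0 ≤ r) (v : σ) : T.upMax v (T.srIdx r v) ≤ r / 4 :=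
  upMax_le_of T r hr v _ (srIdx_mem T r v).2

/-- key letter lemma -/
lemma tdist_le_sr (r : ℝ) (hr : 0 ≤ r) (a b : σ) :
    T.tdist a b ≤ T.tdist (T.sr r a) (T.sr r b) + r / 4 := by
  have key : ∀ c ∈ {c | ∃ j k, T.anc (T.sr r a) j = T.anc (T.sr r b) k ∧
      c = max (T.upMax (T.sr r a) j) (T.upMax (T.sr r b) k)}, T.tdist a b - r / 4 ≤ c := by
    rintro c ⟨j, k, hjk, rfl⟩
    have hmem : max (T.upMax a (T.srIdx r a + j)) (T.upMax b (T.srIdx r b + k)) ∈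
        {c | ∃ j' k', T.anc a j' = T.anc b k' ∧ c = max (T.upMax a j') (T.upMax b k')} := by
      refine ⟨_, _, ?_, rfl⟩
      rw [anc_add, anc_add]; exact hjk
    have h1 : T.tdist a b ≤ max (T.upMax a (T.srIdx r a + j)) (T.upMax b (T.srIdx r b + k)) :=
      csInf_le (tdistSet_bddBelow T a b) hmem
    set X := T.upMax (T.sr r a) j with hX
    set Y := T.upMax (T.sr r b) k with hY
    have hXnn : 0 ≤ X := upMax_nonneg T _ j
    have hYnn : 0 ≤ Y := upMax_nonneg T _ k
    have hea : T.upMax (T.anc a (T.srIdx r a)) j = X := rfl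
    have heb : T.upMax (T.anc b (T.srIdx r b)) k = Y := rfl
    have h2 : T.upMax a (T.srIdx r a + j) ≤ max X Y + r / 4 := by
      rw [upMax_add, hea]
      have hsa := upMax_sr_le T r hr a
      refine max_le ?_ ?_
      · have : (0:ℝ) ≤ max X Y := le_max_of_le_left hXnn
        linarith
      · have : X ≤ max X Y := le_max_left X Y
        linarith [div_nonneg hr (by norm_num : (0:ℝ) ≤ 4)]
    have h3 : T.upMax b (T.srIdx r b + k) ≤ max X Y + r / 4 := by
      rw [upMax_add, heb]
      have hsb := upMax_sr_le T r hr b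
      refine max_le ?_ ?_
      · have : (0:ℝ) ≤ max X Y := le_max_of_le_left hXnn
        linarith
      · have : Y ≤ max X Y := le_max_right X Y
        linarith [div_nonneg hr (by norm_num : (0:ℝ) ≤ 4)]
    have h4 := max_le h2 h3
    linarith
  have hfin : T.tdist a b - r / 4 ≤ T.tdist (T.sr r a) (T.sr r b) := by
    unfold WSTree.tdist
    exact le_csInf (tdistSet_nonempty T (T.sr r a) (T.sr r b)) key
  linarith


/-- Warping-path style alignments. -/
inductive Al : List σ → List σ → List (σ × σ) → Prop
  | single (a b : σ) : Al [a] [b] [(a,b)]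
  | stepL (a b : σ) (x y : List σ) (p : List (σ × σ)) :
      Al x (b::y) p → Al (a::x) (b::y) ((a,b)::p)
  | stepR (a b : σ) (x y : List σ) (p : List (σ × σ)) :
      Al (a::x) y p → Al (a::x) (b::y) ((a,b)::p)
  | stepD (a b : σ) (x y : List σ) (p : List (σ × σ)) :
      Al x y p → Al (a::x) (b::y) ((a,b)::p)
  | stepS (a b : σ) (x y : List σ) (p : List (σ × σ)) :
      Al (a::x) (b::y) p → Al (a::x) (b::y) ((a,b)::p)

noncomputable def pcost (δ : σ → σ → ℝ) (p : List (σ × σ)) : ℝ :=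
  (p.map fun ab => δ ab.1 ab.2).sum

lemma pcost_cons (δ : σ → σ → ℝ) (a : σ × σ) (p : List (σ × σ)) :
    pcost δ (a :: p) = δ a.1 a.2 + pcost δ p := by simp [pcost]

lemma pcost_nonneg (δ : σ → σ → ℝ) (hδ : ∀ u v, 0 ≤ δ u v) (p : List (σ × σ)) :
    0 ≤ pcost δ p := by
  induction p with
  | nil => simp [pcost]
  | cons a p ih => rw [pcost_cons]; have := hδ a.1 a.2; linarith

/-- expansion: duplicate the head once more -/
lemma isExpansion_cons_dup {a : σ} {x xb : List σ} (h : IsExpansion (a::x) xb) :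
    IsExpansion (a::x) (a::xb) := by
  obtain ⟨ks, hlen, hpos, hflat⟩ := h
  match ks, hlen with
  | k::ks', hlen =>
    refine ⟨(k+1)::ks', by simpa using hlen, ?_, ?_⟩
    · intro m hm
      rcases List.mem_cons.1 hm with rfl | hm
      · omega
      · exact hpos m (List.mem_cons_of_mem _ hm)
    · simp only [List.zipWith_cons_cons, List.flatten_cons] at hflat ⊢
      rw [hflat, List.replicate_succ, List.cons_append]

/-- expansion: cons a fresh letter with multiplicity 1 -/
lemma isExpansion_cons_one {a : σ} {x xb : List σ} (h : IsExpansion x xb) :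
    IsExpansion (a::x) (a::xb) := by
  obtain ⟨ks, hlen, hpos, hflat⟩ := h
  refine ⟨1::ks, by simpa using hlen, ?_, ?_⟩
  · intro m hm
    rcases List.mem_cons.1 hm with rfl | hm
    · omega
    · exact hpos m hm
  · simp [hflat]

lemma al_corr {x y : List σ} {p : List (σ × σ)} (h : Al x y p) :
    IsCorrespondence x y (p.map Prod.fst) (p.map Prod.snd) := by
  induction h with
  | single a b =>
      exact ⟨⟨[1], rfl, by simp, by simp⟩, ⟨[1], rfl, by simp, by simp⟩, rfl⟩
  | stepL a b x y p _ ih =>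
      obtain ⟨h1, h2, h3⟩ := ih
      exact ⟨isExpansion_cons_one h1, isExpansion_cons_dup h2, by simp⟩
  | stepR a b x y p _ ih =>
      obtain ⟨h1, h2, h3⟩ := ih
      exact ⟨isExpansion_cons_dup h1, isExpansion_cons_one h2, by simp⟩
  | stepD a b x y p _ ih =>
      obtain ⟨h1, h2, h3⟩ := ih
      exact ⟨isExpansion_cons_one h1, isExpansion_cons_one h2, by simp⟩
  | stepS a b x y p _ ih =>
      obtain ⟨h1, h2, h3⟩ := ih
      exact ⟨isExpansion_cons_dup h1, isExpansion_cons_dup h2, by simp⟩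

lemma corrCost_eq_pcost (δ : σ → σ → ℝ) (p : List (σ × σ)) :
    corrCost δ (p.map Prod.fst) (p.map Prod.snd) = pcost δ p := by
  induction p with
  | nil => simp [corrCost, pcost]
  | cons a p ih => simp only [List.map_cons, corrCost, List.zipWith_cons_cons,
      List.sum_cons, pcost_cons] at ih ⊢; rw [ih]

/-- Shortening: any alignment can be replaced by one of length ≤ |x| + |y| without
increasing the cost. -/
lemma al_shorten (δ : σ → σ → ℝ) (hδ : ∀ u v, 0 ≤ δ u v) {x y : List σ} {p : List (σ × σ)}
    (h : Al x y p) :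
    ∃ p', Al x y p' ∧ p'.length ≤ x.length + y.length ∧ pcost δ p' ≤ pcost δ p := by
  induction h with
  | single a b => exact ⟨[(a,b)], Al.single a b, by simp, le_refl _⟩
  | stepL a b x y p _ ih =>
      obtain ⟨p', hal, hlen, hc⟩ := ih
      refine ⟨(a,b)::p', Al.stepL _ _ _ _ _ hal, by simp at hlen ⊢; omega, ?_⟩
      rw [pcost_cons, pcost_cons]; linarith
  | stepR a b x y p _ ih =>
      obtain ⟨p', hal, hlen, hc⟩ := ih
      refine ⟨(a,b)::p', Al.stepR _ _ _ _ _ hal, by simp at hlen ⊢; omega, ?_⟩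
      rw [pcost_cons, pcost_cons]; linarith
  | stepD a b x y p _ ih =>
      obtain ⟨p', hal, hlen, hc⟩ := ih
      refine ⟨(a,b)::p', Al.stepD _ _ _ _ _ hal, by simp at hlen ⊢; omega, ?_⟩
      rw [pcost_cons, pcost_cons]; linarith
  | stepS a b x y p _ ih =>
      obtain ⟨p', hal, hlen, hc⟩ := ih
      refine ⟨p', hal, hlen, ?_⟩
      rw [pcost_cons]; have := hδ a b; linarith

/-- Lifting an alignment of mapped strings back. -/
lemma al_lift (f : σ → σ) {X Y : List σ} {p : List (σ × σ)} (h : Al X Y p) :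
    ∀ x y : List σ, X = x.map f → Y = y.map f →
    ∃ q, Al x y q ∧ p = q.map (fun ab => (f ab.1, f ab.2)) := by
  induction h with
  | single a b =>
      rintro x y hx hy
      match x, hx with
      | [a'], hx =>
        match y, hy with
        | [b'], hy =>
          simp at hx hy
          exact ⟨[(a', b')], Al.single a' b', by simp [hx, hy]⟩
  | stepL a b X Y p _ ih =>
      rintro x y hx hy
      match x, hx with
      | a'::x', hx =>
        match y, hy with
        | b'::y', hy =>
          simp only [List.map_cons, List.cons.injEq] at hx hy
          obtain ⟨q, hal, hq⟩ := ih x' (b'::y') hx.2 (by simp [hy.1, hy.2])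
          exact ⟨(a',b')::q, Al.stepL _ _ _ _ _ hal, by simp [hq, hx.1, hy.1]⟩
  | stepR a b X Y p _ ih =>
      rintro x y hx hy
      match x, hx with
      | a'::x', hx =>
        match y, hy with
        | b'::y', hy =>
          simp only [List.map_cons, List.cons.injEq] at hx hy
          obtain ⟨q, hal, hq⟩ := ih (a'::x') y' (by simp [hx.1, hx.2]) hy.2
          exact ⟨(a',b')::q, Al.stepR _ _ _ _ _ hal, by simp [hq, hx.1, hy.1]⟩
  | stepD a b X Y p _ ih =>
      rintro x y hx hy
      match x, hx with
      | a'::x', hx =>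
        match y, hy with
        | b'::y', hy =>
          simp only [List.map_cons, List.cons.injEq] at hx hy
          obtain ⟨q, hal, hq⟩ := ih x' y' hx.2 hy.2
          exact ⟨(a',b')::q, Al.stepD _ _ _ _ _ hal, by simp [hq, hx.1, hy.1]⟩
  | stepS a b X Y p _ ih =>
      rintro x y hx hy
      match x, hx with
      | a'::x', hx =>
        match y, hy with
        | b'::y', hy =>
          simp only [List.map_cons, List.cons.injEq] at hx hy
          obtain ⟨q, hal, hq⟩ := ih (a'::x') (b'::y') (by simp [hx.1, hx.2]) (by simp [hy.1, hy.2])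
          exact ⟨(a',b')::q, Al.stepS _ _ _ _ _ hal, by simp [hq, hx.1, hy.1]⟩

lemma pcost_map (δ : σ → σ → ℝ) (f : σ → σ) (q : List (σ × σ)) :
    pcost δ (q.map (fun ab => (f ab.1, f ab.2))) = pcost (fun u v => δ (f u) (f v)) q := by
  induction q with
  | nil => rfl
  | cons a q ih => simp [pcost_cons, ih]

lemma pcost_le_pcost_add (δ₁ δ₂ : σ → σ → ℝ) (c : ℝ)
    (hpt : ∀ u v, δ₁ u v ≤ δ₂ u v + c) (q : List (σ × σ)) :
    pcost δ₁ q ≤ pcost δ₂ q + q.length * c := by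
  induction q with
  | nil => simp [pcost]
  | cons a q ih =>
      rw [pcost_cons, pcost_cons]
      have := hpt a.1 a.2
      simp only [List.length_cons]
      push_cast
      linarith

lemma al_exists_single : ∀ (y : List σ), y ≠ [] → ∀ a : σ, ∃ p, Al [a] y p := by
  intro y
  induction y with
  | nil => intro h; exact absurd rfl h
  | cons b y ih =>
      intro _ a
      rcases eq_or_ne y [] with rfl | hy
      · exact ⟨[(a,b)], Al.single a b⟩
      · obtain ⟨p, hp⟩ := ih hy a
        exact ⟨(a,b)::p, Al.stepR _ _ _ _ _ hp⟩

lemma al_exists : ∀ (x y : List σ), x ≠ [] → y ≠ [] → ∃ p, Al x y p := by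
  intro x
  induction x with
  | nil => intro y h; exact absurd rfl h
  | cons a x ih =>
      intro y _ hy
      rcases eq_or_ne x [] with rfl | hx
      · exact al_exists_single y hy a
      · match y, hy with
        | b::y', _ =>
          obtain ⟨p, hp⟩ := ih (b::y') hx (by simp)
          exact ⟨(a,b)::p, Al.stepL _ _ _ _ _ hp⟩


def expand (x : List σ) (ks : List ℕ) : List σ :=
  (List.zipWith (fun a k => List.replicate k a) x ks).flatten

lemma expand_cons (a : σ) (x : List σ) (k : ℕ) (ks : List ℕ) :
    expand (a::x) (k::ks) = List.replicate k a ++ expand x ks := by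
  simp [expand]

lemma sum_pos_of_ne_nil {ks : List ℕ} (h : ks ≠ []) (hpos : ∀ k ∈ ks, 0 < k) :
    0 < ks.sum := by
  match ks, h with
  | k::ks', _ =>
    have := hpos k (List.mem_cons_self)
    simp only [List.sum_cons]
    omega

lemma corr_to_al_aux (N : ℕ) : ∀ (x : List σ) (ks : List ℕ) (y : List σ) (ls : List ℕ),
    ks.sum + ls.sum ≤ N →
    ks.length = x.length → ls.length = y.length →
    (∀ k ∈ ks, 0 < k) → (∀ l ∈ ls, 0 < l) →
    x ≠ [] → y ≠ [] → ks.sum = ls.sum →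
    Al x y ((expand x ks).zip (expand y ls)) := by
  induction N with
  | zero =>
      intro x ks y ls hN hkl hll hkp hlp hx hy hsum
      exfalso
      have hks : ks ≠ [] := by
        intro h; rw [h] at hkl; exact hx (List.length_eq_zero_iff.mp hkl.symm)
      have := sum_pos_of_ne_nil hks hkp
      omega
  | succ N ih =>
      intro x ks y ls hN hkl hll hkp hlp hx hy hsum
      match x, hx with
      | a::x', _ =>
      match y, hy with
      | b::y', _ =>
      match ks, hkl with
      | k::ks', hkl =>
      match ls, hll with
      | l::ls', hll =>
      have hk : 0 < k := hkp k (List.mem_cons_self)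
      have hl : 0 < l := hlp l (List.mem_cons_self)
      have hkp' : ∀ m ∈ ks', 0 < m := fun m hm => hkp m (List.mem_cons_of_mem _ hm)
      have hlp' : ∀ m ∈ ls', 0 < m := fun m hm => hlp m (List.mem_cons_of_mem _ hm)
      have hkl' : ks'.length = x'.length := by simpa using hkl
      have hll' : ls'.length = y'.length := by simpa using hll
      obtain ⟨k₁, rfl⟩ : ∃ k₁, k = k₁ + 1 := ⟨k - 1, by omega⟩
      obtain ⟨l₁, rfl⟩ : ∃ l₁, l = l₁ + 1 := ⟨l - 1, by omega⟩
      simp only [List.sum_cons] at hN hsum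
      rw [expand_cons, expand_cons, List.replicate_succ, List.replicate_succ,
        List.cons_append, List.cons_append, List.zip_cons_cons]
      rcases Nat.eq_zero_or_pos k₁ with rfl | hk₁ <;> rcases Nat.eq_zero_or_pos l₁ with rfl | hl₁
      · -- k = 1, l = 1
        simp only [List.replicate_zero, List.nil_append]
        rcases eq_or_ne x' [] with rfl | hx'
        · have hks' : ks' = [] := List.length_eq_zero_iff.mp hkl'
          subst hks'
          have hls0 : ls'.sum = 0 := by simp at hsum; omega
          have hls' : ls' = [] := by
            by_contra hne
            have := sum_pos_of_ne_nil hne hlp'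
            omega
          subst hls'
          have hy' : y' = [] := List.length_eq_zero_iff.mp (by simpa using hll'.symm)
          subst hy'
          simpa [expand] using Al.single a b
        · have hks' : ks' ≠ [] := fun h => hx' (List.length_eq_zero_iff.mp (h ▸ hkl').symm)
          have hkspos := sum_pos_of_ne_nil hks' hkp'
          have hlspos : 0 < ls'.sum := by omega
          have hls' : ls' ≠ [] := by rintro rfl; simp at hlspos
          have hy' : y' ≠ [] := fun h => hls' (List.length_eq_zero_iff.mp (by simp [hll', h]))
          exact Al.stepD _ _ _ _ _ (ih x' ks' y' ls' (by omega) hkl' hll' hkp' hlp' hx' hy'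
            (by omega))
      · -- k = 1, l ≥ 2 : stepL
        have hkspos : 0 < ks'.sum := by omega
        have hks' : ks' ≠ [] := by rintro rfl; simp at hkspos
        have hx' : x' ≠ [] := fun h => hks' (List.length_eq_zero_iff.mp (by simp [hkl', h]))
        have hrec := ih x' ks' (b::y') (l₁::ls') (by simp only [List.sum_cons]; omega)
          hkl' (by simpa using hll')
          hkp' (by intro m hm; rcases List.mem_cons.1 hm with rfl | hm; omega; exact hlp' m hm)
          hx' (by simp) (by simp only [List.sum_cons]; omega)
        rw [expand_cons] at hrec
        simp only [List.replicate_zero, List.nil_append]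
        exact Al.stepL _ _ _ _ _ hrec
      · -- k ≥ 2, l = 1 : stepR
        have hlspos : 0 < ls'.sum := by omega
        have hls' : ls' ≠ [] := by rintro rfl; simp at hlspos
        have hy' : y' ≠ [] := fun h => hls' (List.length_eq_zero_iff.mp (by simp [hll', h]))
        have hrec := ih (a::x') (k₁::ks') y' ls' (by simp only [List.sum_cons]; omega)
          (by simpa using hkl) hll'
          (by intro m hm; rcases List.mem_cons.1 hm with rfl | hm; omega; exact hkp' m hm)
          hlp' (by simp) hy' (by simp only [List.sum_cons]; omega)
        rw [expand_cons] at hrec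
        simp only [List.replicate_zero, List.nil_append]
        exact Al.stepR _ _ _ _ _ hrec
      · -- k ≥ 2, l ≥ 2 : stepS
        have hrec := ih (a::x') (k₁::ks') (b::y') (l₁::ls') (by simp only [List.sum_cons]; omega)
          (by simpa using hkl) (by simpa using hll)
          (by intro m hm; rcases List.mem_cons.1 hm with rfl | hm; omega; exact hkp' m hm)
          (by intro m hm; rcases List.mem_cons.1 hm with rfl | hm; omega; exact hlp' m hm)
          (by simp) (by simp) (by simp only [List.sum_cons]; omega)
        rw [expand_cons, expand_cons] at hrec
        exact Al.stepS _ _ _ _ _ hrec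


lemma expand_length (x : List σ) (ks : List ℕ) (h : ks.length = x.length) :
    (expand x ks).length = ks.sum := by
  induction x generalizing ks with
  | nil =>
      have hks : ks = [] := List.length_eq_zero_iff.mp (by simpa using h)
      subst hks; rfl
  | cons a x ih =>
      match ks, h with
      | k::ks', h =>
        rw [expand_cons]
        simp [ih ks' (by simpa using h)]

lemma zipWith_eq_map_zip (δ : σ → σ → ℝ) :
    ∀ (u v : List σ), List.zipWith δ u v = (u.zip v).map fun ab => δ ab.1 ab.2
  | [], _ => by simp
  | _::_, [] => by simp
  | a::u, b::v => by simp [zipWith_eq_map_zip δ u v]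

lemma corrCost_zip (δ : σ → σ → ℝ) (u v : List σ) :
    corrCost δ u v = pcost δ (u.zip v) := by
  rw [corrCost, zipWith_eq_map_zip]; rfl

lemma corrCost_nonneg (δ : σ → σ → ℝ) (hδ : ∀ u v, 0 ≤ δ u v) (u v : List σ) :
    0 ≤ corrCost δ u v := by
  rw [corrCost_zip]; exact pcost_nonneg δ hδ _

lemma dtwSet_bddBelow (δ : σ → σ → ℝ) (hδ : ∀ u v, 0 ≤ δ u v) (x y : List σ) :
    BddBelow {c | ∃ xb yb, IsCorrespondence x y xb yb ∧ c = corrCost δ xb yb} := by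
  refine ⟨0, ?_⟩
  rintro c ⟨xb, yb, -, rfl⟩
  exact corrCost_nonneg δ hδ xb yb

lemma isExpansion_nil {xb : List σ} (h : IsExpansion [] xb) : xb = [] := by
  obtain ⟨ks, hl, -, hf⟩ := h
  have hks : ks = [] := List.length_eq_zero_iff.mp (by simpa using hl)
  subst hks
  simpa using hf

lemma isExpansion_ne_nil {y yb : List σ} (hy : y ≠ []) (h : IsExpansion y yb) : yb ≠ [] := by
  obtain ⟨ks, hl, hp, hf⟩ := h
  have hks : ks ≠ [] := by
    intro he
    subst he
    exact hy (List.length_eq_zero_iff.mp (by simpa using hl.symm))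
  have hpos := sum_pos_of_ne_nil hks hp
  have hexp : yb = expand y ks := hf
  intro he
  rw [he] at hexp
  have := expand_length y ks hl
  rw [← hexp] at this
  simp at this
  omega

/-- Main comparison: dtw(x,y) ≤ dtw-set element for simplifications + n r / 2. -/
lemma dtw_le_of_sr (T : WSTree σ) (r : ℝ) (hr0 : 0 ≤ r) (n : ℕ)
    (x y : List σ) (hx : x.length ≤ n) (hy : y.length ≤ n)
    (hxe : x ≠ []) (hye : y ≠ []) (c : ℝ)
    (hc : c ∈ {c | ∃ ub vb, IsCorrespondence (x.map (T.sr r)) (y.map (T.sr r)) ub vb ∧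
        c = corrCost T.tdist ub vb}) :
    dtw T.tdist x y ≤ c + (n : ℝ) * r / 2 := by
  obtain ⟨ub, vb, ⟨hexu, hexv, hlen⟩, rfl⟩ := hc
  obtain ⟨ks, hklen, hkpos, hkflat⟩ := hexu
  obtain ⟨ls, hllen, hlpos, hlflat⟩ := hexv
  have hub : ub = expand (x.map (T.sr r)) ks := hkflat
  have hvb : vb = expand (y.map (T.sr r)) ls := hlflat
  have hsum : ks.sum = ls.sum := by
    rw [hub, hvb, expand_length _ _ hklen, expand_length _ _ hllen] at hlen
    exact hlen
  have hxm : x.map (T.sr r) ≠ [] := by simpa using hxe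
  have hym : y.map (T.sr r) ≠ [] := by simpa using hye
  have hal : Al (x.map (T.sr r)) (y.map (T.sr r)) (ub.zip vb) := by
    rw [hub, hvb]
    exact corr_to_al_aux (ks.sum + ls.sum) _ ks _ ls le_rfl hklen hllen hkpos hlpos hxm hym hsum
  obtain ⟨p', hal', hplen, hpcost⟩ := al_shorten T.tdist (tdist_nonneg T) hal
  obtain ⟨q, halq, hq⟩ := al_lift (T.sr r) hal' x y rfl rfl
  have hbdd := dtwSet_bddBelow T.tdist (tdist_nonneg T) x y
  have hd1 : dtw T.tdist x y ≤ pcost T.tdist q := by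
    refine csInf_le hbdd ⟨q.map Prod.fst, q.map Prod.snd, al_corr halq, ?_⟩
    rw [corrCost_eq_pcost]
  have hd2 : pcost T.tdist q ≤
      pcost (fun u v => T.tdist (T.sr r u) (T.sr r v)) q + q.length * (r / 4) :=
    pcost_le_pcost_add _ _ _ (fun u v => tdist_le_sr T r hr0 u v) q
  have hd3 : pcost (fun u v => T.tdist (T.sr r u) (T.sr r v)) q = pcost T.tdist p' := by
    rw [hq, pcost_map]
  have hqlen : q.length = p'.length := by rw [hq, List.length_map]
  have hql : (q.length : ℝ) ≤ 2 * n := by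
    rw [hqlen]
    have : p'.length ≤ x.length + y.length := by simpa using hplen
    have h2n : p'.length ≤ 2 * n := by omega
    exact_mod_cast h2n
  have hmul : (q.length : ℝ) * (r / 4) ≤ 2 * n * (r / 4) :=
    mul_le_mul_of_nonneg_right hql (by positivity)
  have hcc : pcost T.tdist (ub.zip vb) = corrCost T.tdist ub vb := (corrCost_zip _ _ _).symm
  have : (2 : ℝ) * n * (r / 4) = (n : ℝ) * r / 2 := by ring
  linarith

end DTWAux

/-- If dtw(x, y) > nr then dtw(s_r(x), s_r(y)) > nr/2. -/
theorem dtw_sr_gt {σ : Type*} (T : WSTree σ) (r : ℝ) (hr : 1 ≤ r)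
    (n : ℕ) (x y : List σ) (hx : x.length ≤ n) (hy : y.length ≤ n)
    (h : (n : ℝ) * r < dtw T.tdist x y) :
    (n : ℝ) * r / 2 < dtw T.tdist (x.map (T.sr r)) (y.map (T.sr r)) := by
  have hr0 : (0 : ℝ) ≤ r := by linarith
  have hnr : (0 : ℝ) ≤ (n : ℝ) * r := mul_nonneg (Nat.cast_nonneg n) hr0
  by_cases hxe : x = []
  · exfalso
    subst hxe
    by_cases hye : y = []
    · subst hye
      have hmem : (0 : ℝ) ∈ {c | ∃ xb yb, IsCorrespondence ([] : List σ) [] xb yb ∧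
          c = corrCost T.tdist xb yb} :=
        ⟨[], [], ⟨⟨[], rfl, by simp, rfl⟩, ⟨[], rfl, by simp, rfl⟩, rfl⟩, by simp [corrCost]⟩
      have : dtw T.tdist ([] : List σ) [] ≤ 0 :=
        csInf_le (DTWAux.dtwSet_bddBelow T.tdist (DTWAux.tdist_nonneg T) [] []) hmem
      linarith
    · have hempty : {c | ∃ xb yb, IsCorrespondence ([] : List σ) y xb yb ∧
          c = corrCost T.tdist xb yb} = ∅ := by
        ext c
        simp only [Set.mem_setOf_eq, Set.mem_empty_iff_false, iff_false]
        rintro ⟨xb, yb, ⟨h1, h2, h3⟩, -⟩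
        have hxb : xb = [] := DTWAux.isExpansion_nil h1
        have hyb : yb = [] := by
          rw [hxb] at h3
          exact List.length_eq_zero_iff.mp h3.symm
        exact DTWAux.isExpansion_ne_nil hye h2 hyb
      have : dtw T.tdist ([] : List σ) y = 0 := by
        rw [dtw, hempty, Real.sInf_empty]
      linarith
  · by_cases hye : y = []
    · exfalso
      subst hye
      have hempty : {c | ∃ xb yb, IsCorrespondence x ([] : List σ) xb yb ∧
          c = corrCost T.tdist xb yb} = ∅ := by
        ext c
        simp only [Set.mem_setOf_eq, Set.mem_empty_iff_false, iff_false]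
        rintro ⟨xb, yb, ⟨h1, h2, h3⟩, -⟩
        have hyb : yb = [] := DTWAux.isExpansion_nil h2
        have hxb : xb = [] := by
          rw [hyb] at h3
          exact List.length_eq_zero_iff.mp h3
        exact DTWAux.isExpansion_ne_nil hxe h1 hxb
      have : dtw T.tdist x ([] : List σ) = 0 := by
        rw [dtw, hempty, Real.sInf_empty]
      linarith
    · have hne : Set.Nonempty {c | ∃ ub vb,
          IsCorrespondence (x.map (T.sr r)) (y.map (T.sr r)) ub vb ∧
          c = corrCost T.tdist ub vb} := by
        obtain ⟨p, hp⟩ := DTWAux.al_exists (x.map (T.sr r)) (y.map (T.sr r))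
          (by simpa using hxe) (by simpa using hye)
        exact ⟨_, p.map Prod.fst, p.map Prod.snd, DTWAux.al_corr hp, rfl⟩
      have hkey : dtw T.tdist x y - (n : ℝ) * r / 2 ≤
          dtw T.tdist (x.map (T.sr r)) (y.map (T.sr r)) := by
        have h2 : ∀ c ∈ {c | ∃ ub vb,
            IsCorrespondence (x.map (T.sr r)) (y.map (T.sr r)) ub vb ∧
            c = corrCost T.tdist ub vb}, dtw T.tdist x y - (n : ℝ) * r / 2 ≤ c := by
          intro c hc
          have := DTWAux.dtw_le_of_sr T r hr0 n x y hx hy hxe hye c hc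
          linarith
        exact le_csInf hne h2
      linarith
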